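/- Let φ be an automorphism of a finite group G, let S be a subgroup of G that is a TI-subgroup (S ∩ S^g = 1 for all g ∉ N_G(S)) and such that φ does not normalize S (i.e., S^φ ≠ S, viewing the action in the semidirect product G⟨φ⟩). Then for every nontrivial x ∈ S and every k ≥ 0, the iterated commutator [φ, _k x] (computed in G⟨φ⟩, with [φ, _0 x] := φ) does not lie in N_{G⟨φ⟩}(S). -/

import Mathlib

open scoped commutatorElement

/-- Iterated right Engel commutator `[φ, _{n+1} x]` of an automorphism `φ` with an
element `x`, computed in the semidirect product `G⟨φ⟩`: these all lie in `G`, with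
`rEngelAut φ x 0 = [φ, x] = φ⁻¹ x⁻¹ φ x = (x⁻¹)^{φ⁻¹} · x`. -/
def rEngelAut {G : Type} [Group G] (φ : MulAut G) (x : G) : ℕ → G
  | 0 => φ⁻¹ x⁻¹ * x
  | n + 1 => ⁅rEngelAut φ x n, x⁆

/-- Let `S` be a Sylow `s`-subgroup of a finite group `G` which is a TI-subgroup,
and let `φ` be an automorphism of `G` not normalizing `S`.  Then for every nontrivial
`x ∈ S` and every `k`, the iterated commutator `[φ, _k x]` does not lie in the
normalizer of `S` (for `k = 0` this is the hypothesis `φ ∉ N(S)`; for `k ≥ 1` the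
commutators lie in `G` and do not normalize `S`). -/
theorem stmt10 (G : Type) [Group G] [Finite G] (s : ℕ) (hs : s.Prime)
    (S : Sylow s G)
    (hTI : ∀ g : G, (∃ y ∈ (S : Subgroup G), y ≠ 1 ∧ g⁻¹ * y * g ∈ (S : Subgroup G)) →
      g ∈ Subgroup.normalizer ((S : Subgroup G) : Set G))
    (φ : MulAut G) (hφ : Subgroup.map φ.toMonoidHom (S : Subgroup G) ≠ (S : Subgroup G)) :
    ∀ x ∈ (S : Subgroup G), x ≠ 1 → ∀ k : ℕ,
      rEngelAut φ x k ∉ Subgroup.normalizer ((S : Subgroup G) : Set G) := by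
  haveI : Fact s.Prime := ⟨hs⟩
  intro x hx hx1 k
  -- x has s-power order
  obtain ⟨m, hm⟩ := S.2 ⟨x, hx⟩
  have hxm : x ^ s ^ m = 1 := by
    have := congrArg (Subtype.val) hm
    simpa using this
  -- key: an s-element of the normalizer of S lies in S
  have key : ∀ n : G, n ∈ Subgroup.normalizer ((S : Subgroup G) : Set G) → n ^ s ^ m = 1 →
      n ∈ (S : Subgroup G) := by
    intro n hn hnm
    obtain ⟨j, -, hj⟩ := (Nat.dvd_prime_pow hs).mp (orderOf_dvd_of_pow_eq_one hnm)
    have hPz : IsPGroup s (Subgroup.zpowers n) :=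
      IsPGroup.of_card (n := j) (by rw [Nat.card_zpowers, hj])
    have hmem : n ∈ Subgroup.zpowers n ⊓ Subgroup.normalizer (S : Set G) :=
      ⟨Subgroup.mem_zpowers n, hn⟩
    rw [IsPGroup.inf_normalizer_sylow hPz S] at hmem
    exact hmem.2
  induction k with
  | zero =>
    intro h0
    simp only [rEngelAut] at h0
    -- φ⁻¹ x⁻¹ ∈ N(S)
    have h1 : (φ⁻¹ : MulAut G) x⁻¹ ∈ Subgroup.normalizer ((S : Subgroup G) : Set G) := by
      have := mul_mem h0 (Subgroup.le_normalizer (inv_mem hx))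
      simpa [mul_assoc] using this
    have h2 : ((φ⁻¹ : MulAut G) x⁻¹) ^ s ^ m = 1 := by
      rw [← map_pow, inv_pow, hxm, inv_one, map_one]
    have h3 : (φ⁻¹ : MulAut G) x⁻¹ ∈ (S : Subgroup G) := key _ h1 h2
    -- hence x⁻¹ ∈ φ(S)
    have h4 : x⁻¹ ∈ Subgroup.map φ.toMonoidHom (S : Subgroup G) := by
      refine ⟨(φ⁻¹ : MulAut G) x⁻¹, h3, ?_⟩
      simp
    -- φ(S) is a Sylow subgroup, conjugate to S
    let T : Sylow s G := Sylow.mapSurjective (f := φ.toMonoidHom)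
      (MulEquiv.surjective φ) S
    have hT : (T : Subgroup G) = Subgroup.map φ.toMonoidHom (S : Subgroup G) := rfl
    obtain ⟨g, hg⟩ := MulAction.exists_smul_eq G S T
    have h5 : x⁻¹ ∈ (g • S : Sylow s G).toSubgroup := by
      rw [hg, hT]; exact h4
    have h6 : g⁻¹ * x⁻¹ * g ∈ (S : Subgroup G) := by
      rw [Sylow.coe_subgroup_smul, Subgroup.mem_pointwise_smul_iff_inv_smul_mem] at h5
      simpa [MulAut.smul_def, mul_assoc] using h5
    have hgN : g ∈ Subgroup.normalizer ((S : Subgroup G) : Set G) :=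
      hTI g ⟨x⁻¹, inv_mem hx, inv_ne_one.mpr hx1, h6⟩
    have : g • S = S := Sylow.smul_eq_iff_mem_normalizer.mpr hgN
    rw [this] at hg
    exact hφ (by rw [← hT, ← hg])
  | succ n ih =>
    intro h0
    simp only [rEngelAut, commutatorElement_def] at h0
    set c := rEngelAut φ x n with hc
    -- c x c⁻¹ ∈ N(S)
    have h1 : c * x * c⁻¹ ∈ Subgroup.normalizer ((S : Subgroup G) : Set G) := by
      have := mul_mem h0 (Subgroup.le_normalizer hx)
      simpa [mul_assoc] using this
    have h2 : (c * x * c⁻¹) ^ s ^ m = 1 := by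
      rw [conj_pow, hxm, mul_one, mul_inv_cancel]
    have h3 : c * x * c⁻¹ ∈ (S : Subgroup G) := key _ h1 h2
    have h4 : c * x * c⁻¹ ≠ 1 := by
      simp [mul_inv_eq_one, hx1, ← mul_assoc]
    have h5 : c⁻¹ * (c * x * c⁻¹) * c ∈ (S : Subgroup G) := by
      have : c⁻¹ * (c * x * c⁻¹) * c = x := by group
      rw [this]; exact hx
    exact ih (hTI c ⟨c * x * c⁻¹, h3, h4, h5⟩)
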